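/- Let A be a completely positive map Aρ = Σᵢ₌₁ˢ Vᵢ†ρVᵢ on an n-dimensional Hilbert space. If there exist n+1 pure states ρ₁,…,ρ_{n+1} in general position (any n of the corresponding vectors form a basis) such that each Aρⱼ has rank one and the Aρⱼ are in general position, then A is a nonnegative multiple of a single Kraus map: Aρ = β V†ρV for some β > 0 and invertible V. -/

import Mathlib

open scoped Matrix

open Matrix in
private lemma conj_mul_vecMulVec {n : ℕ} (V : Matrix (Fin n) (Fin n) ℂ) (x : Fin n → ℂ) :
    Vᴴ * vecMulVec x (star x) * V = vecMulVec (Vᴴ *ᵥ x) (star (Vᴴ *ᵥ x)) := by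
  ext p q
  simp only [Matrix.mul_apply, vecMulVec_apply, mulVec, dotProduct, conjTranspose_apply,
    Pi.star_apply, Finset.sum_mul, Finset.mul_sum, star_sum, star_mul', star_star]
  refine Finset.sum_congr rfl fun i _ => Finset.sum_congr rfl fun j _ => by ring

open Matrix in
private lemma star_dot_self_eq {n : ℕ} (v : Fin n → ℂ) :
    star v ⬝ᵥ v = ((∑ k, Complex.normSq (v k) : ℝ) : ℂ) := by
  rw [Complex.ofReal_sum]
  simp only [dotProduct, Pi.star_apply, Complex.star_def]
  refine Finset.sum_congr rfl fun k _ => ?_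
  rw [mul_comm, Complex.mul_conj]

open Matrix in
private lemma star_dot_self_eq_zero_iff {n : ℕ} {v : Fin n → ℂ} :
    star v ⬝ᵥ v = 0 ↔ v = 0 := by
  rw [star_dot_self_eq]
  norm_cast
  rw [Finset.sum_eq_zero_iff_of_nonneg (fun k _ => Complex.normSq_nonneg _)]
  constructor
  · intro h; funext k; exact Complex.normSq_eq_zero.mp (h k (Finset.mem_univ _))
  · intro h k _; simp [h]

open Matrix in
private lemma quad_form {n : ℕ} (u z : Fin n → ℂ) :
    star z ⬝ᵥ (vecMulVec u (star u) *ᵥ z)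
      = (Complex.normSq (star u ⬝ᵥ z) : ℂ) := by
  have h1 : star z ⬝ᵥ (vecMulVec u (star u) *ᵥ z)
      = star (star u ⬝ᵥ z) * (star u ⬝ᵥ z) := by
    simp only [dotProduct, mulVec, vecMulVec_apply, Pi.star_apply, star_sum, star_mul',
      star_star, Finset.mul_sum, Finset.sum_mul]
    rw [Finset.sum_comm]
    refine Finset.sum_congr rfl fun p _ => Finset.sum_congr rfl fun q _ => by ring
  rw [h1, Complex.star_def, mul_comm, Complex.mul_conj]

open Matrix in
private lemma sumM_mulVec {n s : ℕ} (M : Fin s → Matrix (Fin n) (Fin n) ℂ) (z : Fin n → ℂ) :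
    (∑ i, M i) *ᵥ z = ∑ i, M i *ᵥ z := by
  ext p
  simp only [mulVec, dotProduct, Finset.sum_apply, Matrix.sum_apply, Finset.sum_mul]
  rw [Finset.sum_comm]

open Matrix in
private lemma dot_sum {n s : ℕ} (v : Fin n → ℂ) (u : Fin s → Fin n → ℂ) :
    v ⬝ᵥ (∑ i, u i) = ∑ i, v ⬝ᵥ u i := by
  simp only [dotProduct, Finset.sum_apply, Finset.mul_sum]
  rw [Finset.sum_comm]

open Matrix in
private lemma rank_one_sum {n s : ℕ} (w : Fin s → Fin n → ℂ) (y : Fin n → ℂ)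
    (h : ∑ i, vecMulVec (w i) (star (w i)) = vecMulVec y (star y)) (i₀ : Fin s) :
    ∃ c : ℂ, w i₀ = c • y := by
  set c : ℂ := (star y ⬝ᵥ w i₀) / (star y ⬝ᵥ y) with hc
  set z : Fin n → ℂ := w i₀ - c • y with hz
  have hyz : star y ⬝ᵥ z = 0 := by
    rcases eq_or_ne y 0 with h0 | h0
    · simp [hz, h0]
    · have hyy : star y ⬝ᵥ y ≠ 0 := fun h' => h0 (star_dot_self_eq_zero_iff.mp h')
      simp only [hz, dotProduct_sub, dotProduct_smul, smul_eq_mul, hc]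
      field_simp
      ring
  have hq := congrArg (fun M => star z ⬝ᵥ (M *ᵥ z)) h
  simp only [sumM_mulVec, dot_sum, quad_form, hyz] at hq
  have hq' : ∑ i, Complex.normSq (star (w i) ⬝ᵥ z) = 0 := by
    rw [← Complex.ofReal_sum, Complex.normSq_zero] at hq
    exact_mod_cast hq
  have hwz : star (w i₀) ⬝ᵥ z = 0 := Complex.normSq_eq_zero.mp
    ((Finset.sum_eq_zero_iff_of_nonneg (fun i _ => Complex.normSq_nonneg _)).mp hq' i₀
      (Finset.mem_univ _))
  have hw : w i₀ = z + c • y := by simp [hz]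
  have hzz : star z ⬝ᵥ z = 0 := by
    have h2 : star (w i₀) ⬝ᵥ z = star z ⬝ᵥ z + star c * (star y ⬝ᵥ z) := by
      rw [hw]
      simp [add_dotProduct, smul_dotProduct, star_add, star_smul, smul_eq_mul]
    rw [hwz, hyz, mul_zero, add_zero] at h2
    exact h2.symm
  have hz0 : z = 0 := star_dot_self_eq_zero_iff.mp hzz
  exact ⟨c, by rw [hw, hz0, zero_add]⟩

/-- Vectors x₁,…,x_{n+1} in ℂⁿ are in general position if any n of them are
linearly independent. -/
def InGeneralPosition {n : ℕ} (x : Fin (n + 1) → (Fin n → ℂ)) : Prop :=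
  ∀ s : Finset (Fin (n + 1)), s.card = n →
    LinearIndependent ℂ (fun i : s => x i.1)

private lemma gp_li {n : ℕ} {x : Fin (n + 1) → Fin n → ℂ} (hx : InGeneralPosition x)
    (j : Fin (n + 1)) :
    LinearIndependent ℂ (fun k : Fin n => x (j.succAbove k)) := by
  have hcard : (Finset.univ.erase j).card = n := by
    rw [Finset.card_erase_of_mem (Finset.mem_univ _)]
    simp
  have hli := hx _ hcard
  have : (fun k : Fin n => x (j.succAbove k))
      = (fun i : (Finset.univ.erase j : Finset (Fin (n+1))) => x i.1) ∘
        (fun k : Fin n => (⟨j.succAbove k, by simp [Finset.mem_erase, Fin.succAbove_ne]⟩ :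
          (Finset.univ.erase j : Finset (Fin (n+1))))) := rfl
  rw [this]
  exact hli.comp _ (fun k₁ k₂ h => Fin.succAbove_right_injective (congrArg Subtype.val h))

/-- If a completely positive map Aρ = Σᵢ Vᵢ†ρVᵢ on an
n-dimensional Hilbert space sends n+1 pure states in general position to
rank-one operators in general position, then A is a positive multiple of a
single invertible Kraus map: Aρ = β V†ρV, β > 0, V invertible. -/
theorem stmt_15 (n s : ℕ)
    (A : Matrix (Fin n) (Fin n) ℂ →ₗ[ℂ] Matrix (Fin n) (Fin n) ℂ)
    (V : Fin s → Matrix (Fin n) (Fin n) ℂ)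
    (hA : ∀ ρ, A ρ = ∑ i, (V i)ᴴ * ρ * V i)
    (x : Fin (n + 1) → (Fin n → ℂ))
    (hx_unit : ∀ j, star (x j) ⬝ᵥ x j = 1)
    (hx_gp : InGeneralPosition x)
    (y : Fin (n + 1) → (Fin n → ℂ))
    (hy_ne : ∀ j, y j ≠ 0)
    (hy_gp : InGeneralPosition y)
    (him : ∀ j, A (Matrix.vecMulVec (x j) (star (x j)))
      = Matrix.vecMulVec (y j) (star (y j))) :
    ∃ (β : ℝ) (V₀ : Matrix (Fin n) (Fin n) ℂ), 0 < β ∧ IsUnit V₀ ∧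
      ∀ ρ, A ρ = (β : ℂ) • (V₀ᴴ * ρ * V₀) := by
  classical
  rcases Nat.eq_zero_or_pos n with hn0 | hn
  · exfalso
    subst hn0
    exact hy_ne 0 (funext fun k => k.elim0)
  have : Nonempty (Fin n) := ⟨⟨0, hn⟩⟩
  set lst : Fin (n + 1) := Fin.last n with hlst
  -- linear independence of the first n vectors
  have hlix : LinearIndependent ℂ (fun k : Fin n => x (Fin.castSucc k)) := by
    have := gp_li hx_gp lst
    simpa [hlst, Fin.succAbove_last] using this
  have hliy : LinearIndependent ℂ (fun k : Fin n => y (Fin.castSucc k)) := by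
    have := gp_li hy_gp lst
    simpa [hlst, Fin.succAbove_last] using this
  have hliy' := Fintype.linearIndependent_iff.mp hliy
  have hfr : Fintype.card (Fin n) = Module.finrank ℂ (Fin n → ℂ) := by
    simp [Module.finrank_fintype_fun_eq_card]
  -- bases
  set bx : Module.Basis (Fin n) ℂ (Fin n → ℂ) := basisOfLinearIndependentOfCardEqFinrank hlix hfr
    with hbx
  set by' : Module.Basis (Fin n) ℂ (Fin n → ℂ) := basisOfLinearIndependentOfCardEqFinrank hliy hfr
    with hby
  have hbxk : ∀ k, bx k = x (Fin.castSucc k) := fun k => by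
    rw [hbx, coe_basisOfLinearIndependentOfCardEqFinrank]
  have hbyk : ∀ k, by' k = y (Fin.castSucc k) := fun k => by
    rw [hby, coe_basisOfLinearIndependentOfCardEqFinrank]
  set a : Fin n → ℂ := fun k => bx.repr (x lst) k with ha
  set b : Fin n → ℂ := fun k => by'.repr (y lst) k with hb
  have hxa : x lst = ∑ k, a k • x (Fin.castSucc k) := by
    conv_lhs => rw [← bx.sum_repr (x lst)]
    exact Finset.sum_congr rfl fun k _ => by rw [hbxk]
  have hyb : y lst = ∑ k, b k • y (Fin.castSucc k) := by
    conv_lhs => rw [← by'.sum_repr (y lst)]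
    exact Finset.sum_congr rfl fun k _ => by rw [hbyk]
  -- all coefficients nonzero
  have key_ne : ∀ (z : Fin (n+1) → Fin n → ℂ) (t : Fin n → ℂ),
      InGeneralPosition z → z lst = ∑ k, t k • z (Fin.castSucc k) → ∀ k, t k ≠ 0 := by
    intro z t hgp hzt k₀ hk0
    have hli := gp_li hgp (Fin.castSucc k₀)
    set G : Fin (n + 1) → ℂ := fun j => if h : j = lst then -1 else t (j.castPred h) with hG
    have hGcs : ∀ k, G (Fin.castSucc k) = t k := by
      intro k
      rw [hG]
      have hne : Fin.castSucc k ≠ lst := (Fin.castSucc_lt_last k).ne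
      simp [hne]
    have hsum0 : ∑ j, G j • z j = 0 := by
      rw [Fin.sum_univ_castSucc]
      have : G lst = -1 := by simp [hG, hlst]
      rw [this]
      simp only [hGcs]
      rw [← hzt]
      simp [hlst]
    have hsum : ∑ k, G ((Fin.castSucc k₀).succAbove k) • z ((Fin.castSucc k₀).succAbove k)
        = 0 := by
      have := Fin.sum_univ_succAbove (fun j => G j • z j) (Fin.castSucc k₀)
      rw [hsum0] at this
      have hzk : G (Fin.castSucc k₀) • z (Fin.castSucc k₀) = 0 := by
        rw [hGcs, hk0, zero_smul]
      rw [hzk, zero_add] at this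
      exact this.symm
    have hall := Fintype.linearIndependent_iff.mp hli
      (fun k => G ((Fin.castSucc k₀).succAbove k)) hsum
    obtain ⟨k₁, hk₁⟩ := Fin.exists_succAbove_eq
      (show lst ≠ Fin.castSucc k₀ from ((Fin.castSucc_lt_last k₀).ne).symm)
    have := hall k₁
    simp only [hk₁, hG, dif_pos rfl] at this
    exact absurd this (by norm_num)
  have ha_ne : ∀ k, a k ≠ 0 := key_ne x a hx_gp hxa
  have hb_ne : ∀ k, b k ≠ 0 := key_ne y b hy_gp hyb
  -- rank-one images: (V i)ᴴ x j is a multiple of y j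
  have hcij : ∀ i j, ∃ c : ℂ, (V i)ᴴ *ᵥ x j = c • y j := by
    intro i j
    refine rank_one_sum (fun i => (V i)ᴴ *ᵥ x j) (y j) ?_ i
    calc ∑ i, Matrix.vecMulVec ((V i)ᴴ *ᵥ x j) (star ((V i)ᴴ *ᵥ x j))
        = ∑ i, (V i)ᴴ * Matrix.vecMulVec (x j) (star (x j)) * V i :=
          Finset.sum_congr rfl fun i _ => (conj_mul_vecMulVec (V i) (x j)).symm
      _ = A (Matrix.vecMulVec (x j) (star (x j))) := (hA _).symm
      _ = Matrix.vecMulVec (y j) (star (y j)) := him j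
  choose c hc using hcij
  -- key relation between the coefficients
  have hkey : ∀ (i : Fin s) (k : Fin n), a k * c i (Fin.castSucc k) = c i lst * b k := by
    intro i k
    have h1 : (V i)ᴴ *ᵥ x lst = ∑ k, (a k * c i (Fin.castSucc k)) • y (Fin.castSucc k) := by
      rw [hxa]
      have : (V i)ᴴ *ᵥ (∑ k, a k • x (Fin.castSucc k))
          = ∑ k, a k • ((V i)ᴴ *ᵥ x (Fin.castSucc k)) := by
        rw [← Matrix.mulVecLin_apply, map_sum]
        exact Finset.sum_congr rfl fun k _ => by rw [map_smul, Matrix.mulVecLin_apply]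
      rw [this]
      exact Finset.sum_congr rfl fun k _ => by rw [hc, smul_smul]
    have h2 : (V i)ᴴ *ᵥ x lst = ∑ k, (c i lst * b k) • y (Fin.castSucc k) := by
      rw [hc, hyb, Finset.smul_sum]
      exact Finset.sum_congr rfl fun k _ => by rw [smul_smul]
    have h3 : ∑ k, (a k * c i (Fin.castSucc k) - c i lst * b k) • y (Fin.castSucc k) = 0 := by
      simp only [sub_smul, Finset.sum_sub_distrib]
      rw [← h1, ← h2, sub_self]
    exact sub_eq_zero.mp (hliy' _ h3 k)
  set μ : Fin n → ℂ := fun k => b k / a k with hμ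
  have hμ_ne : ∀ k, μ k ≠ 0 := fun k => div_ne_zero (hb_ne k) (ha_ne k)
  have hccs : ∀ i k, c i (Fin.castSucc k) = c i lst * μ k := by
    intro i k
    have h := hkey i k
    show c i (Fin.castSucc k) = c i lst * (b k / a k)
    rw [mul_div_assoc', eq_div_iff (ha_ne k)]
    linear_combination h
  set T : (Fin n → ℂ) →ₗ[ℂ] (Fin n → ℂ) := bx.constr ℂ (fun k => μ k • y (Fin.castSucc k))
    with hT
  set M : Matrix (Fin n) (Fin n) ℂ := LinearMap.toMatrix' T with hM
  have hMv : ∀ v, M *ᵥ v = T v := fun v => by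
    rw [← Matrix.toLin'_apply, hM, Matrix.toLin'_toMatrix']
  have hMb : ∀ k, M *ᵥ x (Fin.castSucc k) = μ k • y (Fin.castSucc k) := by
    intro k
    rw [hMv, ← hbxk k, hT]
    exact bx.constr_basis ℂ _ k
  have hVM : ∀ i, (V i)ᴴ = c i lst • M := by
    intro i
    apply Matrix.toLin'.injective
    apply bx.ext
    intro k
    rw [Matrix.toLin'_apply, Matrix.toLin'_apply, hbxk]
    rw [hc, hccs, Matrix.smul_mulVec, hMb, smul_smul]
  set β : ℝ := ∑ i, Complex.normSq (c i lst) with hβ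
  have hβc : (β : ℂ) = ∑ i, c i lst * star (c i lst) := by
    rw [hβ, Complex.ofReal_sum]
    exact Finset.sum_congr rfl fun i _ => by rw [Complex.star_def, Complex.mul_conj]
  have hform : ∀ ρ, A ρ = (β : ℂ) • (Mᴴᴴ * ρ * Mᴴ) := by
    intro ρ
    rw [hA, Matrix.conjTranspose_conjTranspose]
    calc ∑ i, (V i)ᴴ * ρ * V i
        = ∑ i, (c i lst * star (c i lst)) • (M * ρ * Mᴴ) := by
          refine Finset.sum_congr rfl fun i _ => ?_
          have hVi : V i = star (c i lst) • Mᴴ := by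
            have h4 := congrArg Matrix.conjTranspose (hVM i)
            rwa [Matrix.conjTranspose_conjTranspose, Matrix.conjTranspose_smul] at h4
          rw [hVM i, hVi]
          simp only [Matrix.smul_mul, Matrix.mul_smul, smul_smul]
          rw [mul_comm (star (c i lst)) (c i lst)]
      _ = (β : ℂ) • (M * ρ * Mᴴ) := by rw [← Finset.sum_smul, ← hβc]
  have hβ_nonneg : 0 ≤ β := Finset.sum_nonneg fun i _ => Complex.normSq_nonneg _
  have hβ_ne : β ≠ 0 := by
    intro h0
    have h1 : Matrix.vecMulVec (y lst) (star (y lst)) = 0 := by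
      rw [← him lst, hform, h0]
      simp
    apply hy_ne lst
    funext k
    have h2 := (Matrix.ext_iff.2 h1) k k
    rw [Matrix.vecMulVec_apply, Matrix.zero_apply] at h2
    rcases mul_eq_zero.mp h2 with h3 | h3
    · exact h3
    · simpa using h3
  have hβ_pos : 0 < β := lt_of_le_of_ne hβ_nonneg (Ne.symm hβ_ne)
  have hker : ∀ v, M *ᵥ v = 0 → v = 0 := by
    intro v hv
    have hv' : T v = 0 := by rw [← hMv]; exact hv
    have hvr : v = ∑ k, bx.repr v k • x (Fin.castSucc k) := by
      conv_lhs => rw [← bx.sum_repr v]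
      exact Finset.sum_congr rfl fun k _ => by rw [hbxk]
    have hTv : T v = ∑ k, (bx.repr v k * μ k) • y (Fin.castSucc k) := by
      conv_lhs => rw [hvr]
      rw [map_sum]
      refine Finset.sum_congr rfl fun k _ => ?_
      rw [map_smul, ← hbxk k, hT, bx.constr_basis, smul_smul]
    rw [hv'] at hTv
    have hco : ∀ k, bx.repr v k * μ k = 0 := hliy' _ hTv.symm
    have hr0 : ∀ k, bx.repr v k = 0 := fun k =>
      (mul_eq_zero.mp (hco k)).resolve_right (hμ_ne k)
    rw [hvr]
    simp [hr0]
  have hdet : M.det ≠ 0 := by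
    intro h0
    obtain ⟨v, hv_ne, hv⟩ := (Matrix.exists_mulVec_eq_zero_iff).mpr h0
    exact hv_ne (hker v hv)
  have hunitMH : IsUnit Mᴴ := by
    rw [Matrix.isUnit_iff_isUnit_det, Matrix.det_conjTranspose]
    exact Ne.isUnit (star_ne_zero.mpr hdet)
  exact ⟨β, Mᴴ, hβ_pos, hunitMH, hform⟩
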